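/- arXiv:0811.2249 — 3 statements merged into one kernel-verified Lean document; each statement's English description precedes it below -/
import Mathlib

section
/- Let R ∈ ℝ with R ≠ 0 and let (i,j) be an interior grid point. Then the constraint function g¹_{i,j} : ((Fin N × Fin N) → ℝ) × ((Fin N × Fin N) → ℝ) → ℝ is neither convex nor concave on the whole space: ¬ ConvexOn ℝ Set.univ g¹_{i,j} and ¬ ConcaveOn ℝ Set.univ g¹_{i,j}. -/
open Finset

/-- 1-based grid index into `Fin N` (for in-range `1 ≤ i ≤ N` this is the point `i`). -/
def gridIdx {N : ℕ} (hN : 3 ≤ N) (i : ℕ) : Fin N := ⟨(i - 1) % N, Nat.mod_lt _ (by omega)⟩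

/-- The constraint function `g¹_{i,j}` (discretized vorticity transport equation). -/
noncomputable def g1 {N : ℕ} (hN : 3 ≤ N) (R : ℝ) (i j : ℕ)
    (ψ ω : Fin N × Fin N → ℝ) : ℝ :=
  -4 * ω (gridIdx hN i, gridIdx hN j) + ω (gridIdx hN (i+1), gridIdx hN j)
    + ω (gridIdx hN (i-1), gridIdx hN j) + ω (gridIdx hN i, gridIdx hN (j+1))
    + ω (gridIdx hN i, gridIdx hN (j-1))
    + (R / 4) *
      ((ψ (gridIdx hN (i+1), gridIdx hN j) - ψ (gridIdx hN (i-1), gridIdx hN j))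
          * (ω (gridIdx hN i, gridIdx hN (j+1)) - ω (gridIdx hN i, gridIdx hN (j-1)))
        - (ψ (gridIdx hN i, gridIdx hN (j+1)) - ψ (gridIdx hN i, gridIdx hN (j-1)))
          * (ω (gridIdx hN (i+1), gridIdx hN j) - ω (gridIdx hN (i-1), gridIdx hN j)))

def indF {N : ℕ} (A : Fin N × Fin N) (c : ℝ) : Fin N × Fin N → ℝ :=
  fun p => if p = A then c else 0

lemma gridIdx_ne {N : ℕ} (hN : 3 ≤ N) {a b : ℕ} (h1 : 1 ≤ a) (h2 : a ≤ N)
    (h3 : 1 ≤ b) (h4 : b ≤ N) (hab : a ≠ b) : gridIdx hN a ≠ gridIdx hN b := by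
  simp only [gridIdx, Ne, Fin.mk.injEq]
  rw [Nat.mod_eq_of_lt (by omega), Nat.mod_eq_of_lt (by omega)]
  omega

lemma g1_eval {N : ℕ} (hN : 3 ≤ N) (R : ℝ) (i j : ℕ)
    (hi1 : 2 ≤ i) (hi2 : i ≤ N - 1) (hj1 : 2 ≤ j) (hj2 : j ≤ N - 1) (c d : ℝ) :
    g1 hN R i j (indF (gridIdx hN (i+1), gridIdx hN j) c)
      (indF (gridIdx hN i, gridIdx hN (j+1)) d) = d + R / 4 * (c * d) := by
  have hii1 : gridIdx hN (i-1) ≠ gridIdx hN (i+1) :=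
    gridIdx_ne hN (by omega) (by omega) (by omega) (by omega) (by omega)
  have hii : gridIdx hN i ≠ gridIdx hN (i+1) :=
    gridIdx_ne hN (by omega) (by omega) (by omega) (by omega) (by omega)
  have hip : gridIdx hN (i+1) ≠ gridIdx hN i :=
    gridIdx_ne hN (by omega) (by omega) (by omega) (by omega) (by omega)
  have him : gridIdx hN (i-1) ≠ gridIdx hN i :=
    gridIdx_ne hN (by omega) (by omega) (by omega) (by omega) (by omega)
  have hjj : gridIdx hN j ≠ gridIdx hN (j+1) :=
    gridIdx_ne hN (by omega) (by omega) (by omega) (by omega) (by omega)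
  have hjm : gridIdx hN (j-1) ≠ gridIdx hN (j+1) :=
    gridIdx_ne hN (by omega) (by omega) (by omega) (by omega) (by omega)
  have e1 : indF (gridIdx hN (i+1), gridIdx hN j) c (gridIdx hN (i+1), gridIdx hN j) = c :=
    if_pos rfl
  have e2 : indF (gridIdx hN (i+1), gridIdx hN j) c (gridIdx hN (i-1), gridIdx hN j) = 0 :=
    if_neg (by simp [Prod.ext_iff, hii1])
  have e3 : indF (gridIdx hN (i+1), gridIdx hN j) c (gridIdx hN i, gridIdx hN (j+1)) = 0 :=
    if_neg (by simp [Prod.ext_iff, hii])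
  have e4 : indF (gridIdx hN (i+1), gridIdx hN j) c (gridIdx hN i, gridIdx hN (j-1)) = 0 :=
    if_neg (by simp [Prod.ext_iff, hii])
  have f1 : indF (gridIdx hN i, gridIdx hN (j+1)) d (gridIdx hN i, gridIdx hN j) = 0 :=
    if_neg (by simp [Prod.ext_iff, hjj])
  have f2 : indF (gridIdx hN i, gridIdx hN (j+1)) d (gridIdx hN (i+1), gridIdx hN j) = 0 :=
    if_neg (by simp [Prod.ext_iff, hip])
  have f3 : indF (gridIdx hN i, gridIdx hN (j+1)) d (gridIdx hN (i-1), gridIdx hN j) = 0 :=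
    if_neg (by simp [Prod.ext_iff, him])
  have f4 : indF (gridIdx hN i, gridIdx hN (j+1)) d (gridIdx hN i, gridIdx hN (j+1)) = d :=
    if_pos rfl
  have f5 : indF (gridIdx hN i, gridIdx hN (j+1)) d (gridIdx hN i, gridIdx hN (j-1)) = 0 :=
    if_neg (by simp [Prod.ext_iff, hjm])
  simp only [g1, e1, e2, e3, e4, f1, f2, f3, f4, f5]
  ring


/-- for `R ≠ 0` and an interior grid point `(i,j)`, the constraint
function `g¹_{i,j}` is neither convex nor concave on the whole space. -/
theorem g1_not_convexOn_not_concaveOn {N : ℕ} (hN : 3 ≤ N) (R : ℝ) (hR : R ≠ 0)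
    (i j : ℕ) (hi : i ∈ Finset.Icc 2 (N-1)) (hj : j ∈ Finset.Icc 2 (N-1)) :
    ¬ ConvexOn ℝ (Set.univ : Set (((Fin N × Fin N) → ℝ) × ((Fin N × Fin N) → ℝ)))
        (fun p => g1 hN R i j p.1 p.2)
    ∧ ¬ ConcaveOn ℝ (Set.univ : Set (((Fin N × Fin N) → ℝ) × ((Fin N × Fin N) → ℝ)))
        (fun p => g1 hN R i j p.1 p.2) := by
  obtain ⟨hi1, hi2⟩ := Finset.mem_Icc.mp hi
  obtain ⟨hj1, hj2⟩ := Finset.mem_Icc.mp hj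
  set A : Fin N × Fin N := (gridIdx hN (i+1), gridIdx hN j) with hA
  set B : Fin N × Fin N := (gridIdx hN i, gridIdx hN (j+1)) with hB
  have key : ∀ c d : ℝ, g1 hN R i j (indF A c) (indF B d) = d + R / 4 * (c * d) :=
    fun c d => g1_eval hN R i j hi1 hi2 hj1 hj2 c d
  have hzero : ∀ d : ℝ,
      ((0,0) : ((Fin N × Fin N) → ℝ) × ((Fin N × Fin N) → ℝ)) = (indF A 0, indF B 0) := by
    intro _; refine Prod.ext ?_ ?_ <;> funext p <;> simp [indF]
  have hcomb : ∀ c d : ℝ,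
      ((1:ℝ)/2) • ((0,0) : ((Fin N × Fin N) → ℝ) × ((Fin N × Fin N) → ℝ))
        + ((1:ℝ)/2) • (indF A c, indF B d) = (indF A (c/2), indF B (d/2)) := by
    intro c d
    refine Prod.ext ?_ ?_ <;> funext p <;>
      simp only [Prod.smul_fst, Prod.smul_snd, Prod.fst_add, Prod.snd_add, Pi.add_apply,
        Pi.smul_apply, smul_eq_mul, indF, Pi.zero_apply] <;> split <;> ring
  constructor
  · intro hcv
    have h1 := hcv.2 (Set.mem_univ ((0,0))) (Set.mem_univ ((indF A 2, indF B 2)))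
      (by norm_num : (0:ℝ) ≤ 1/2) (by norm_num : (0:ℝ) ≤ 1/2) (by norm_num)
    have h2 := hcv.2 (Set.mem_univ ((0,0))) (Set.mem_univ ((indF A 2, indF B (-2))))
      (by norm_num : (0:ℝ) ≤ 1/2) (by norm_num : (0:ℝ) ≤ 1/2) (by norm_num)
    rw [hcomb 2 2] at h1
    rw [hcomb 2 (-2)] at h2
    rw [hzero 0] at h1 h2
    simp only [key] at h1 h2
    norm_num at h1 h2
    exact hR (le_antisymm (by linarith) (by linarith))
  · intro hcv
    have h1 := hcv.2 (Set.mem_univ ((0,0))) (Set.mem_univ ((indF A 2, indF B 2)))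
      (by norm_num : (0:ℝ) ≤ 1/2) (by norm_num : (0:ℝ) ≤ 1/2) (by norm_num)
    have h2 := hcv.2 (Set.mem_univ ((0,0))) (Set.mem_univ ((indF A 2, indF B (-2))))
      (by norm_num : (0:ℝ) ≤ 1/2) (by norm_num : (0:ℝ) ≤ 1/2) (by norm_num)
    rw [hcomb 2 2] at h1
    rw [hcomb 2 (-2)] at h2
    rw [hzero 0] at h1 h2
    simp only [key] at h1 h2
    norm_num at h1 h2
    exact hR (le_antisymm (by linarith) (by linarith))
end

section
/- Let u, v : ℝ × ℝ → ℝ be continuously differentiable (ContDiff ℝ 1) and suppose the incompressibility condition holds everywhere: for all p ∈ ℝ × ℝ, fderiv ℝ u p (1,0) + fderiv ℝ v p (0,1) = 0. Then there exists a differentiable stream function ψ : ℝ × ℝ → ℝ such that for all p, fderiv ℝ ψ p (1,0) = −v(p) and fderiv ℝ ψ p (0,1) = u(p). -/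
open MeasureTheory intervalIntegral ContinuousLinearMap Metric Set
open scoped Interval

theorem slice_x (u : ℝ × ℝ → ℝ) (hu : Differentiable ℝ u) (x t : ℝ) :
    HasDerivAt (fun x => u (x, t)) (fderiv ℝ u (x, t) (1, 0)) x := by
  have h1 : HasDerivAt (fun x : ℝ => (x, t)) ((1 : ℝ), (0 : ℝ)) x :=
    (hasDerivAt_id x).prodMk (hasDerivAt_const x t)
  exact (hu (x, t)).hasFDerivAt.comp_hasDerivAt x h1

theorem slice_y (v : ℝ × ℝ → ℝ) (hv : Differentiable ℝ v) (x t : ℝ) :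
    HasDerivAt (fun t => v (x, t)) (fderiv ℝ v (x, t) (0, 1)) t := by
  have h1 : HasDerivAt (fun t : ℝ => (x, t)) ((0 : ℝ), (1 : ℝ)) t :=
    (hasDerivAt_const t x).prodMk (hasDerivAt_id t)
  exact (hv (x, t)).hasFDerivAt.comp_hasDerivAt t h1

theorem uIoc_abs_le {y₀ b t : ℝ} (ht : t ∈ Ι y₀ b) : |t - y₀| ≤ |b - y₀| := by
  rcases Set.mem_uIoc.1 ht with ⟨h1, h2⟩ | ⟨h1, h2⟩ <;>
    rcases abs_cases (b - y₀) with ⟨he, h0⟩ | ⟨he, h0⟩ <;>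
    rw [abs_sub_le_iff] <;> constructor <;> linarith

/-- a `C¹` divergence-free planar velocity field `(u, v)` admits a
differentiable stream function `ψ` with `∂ψ/∂x = −v` and `∂ψ/∂y = u`. -/
theorem exists_stream_function (u v : ℝ × ℝ → ℝ)
    (hu : ContDiff ℝ 1 u) (hv : ContDiff ℝ 1 v)
    (hdiv : ∀ p : ℝ × ℝ, fderiv ℝ u p (1, 0) + fderiv ℝ v p (0, 1) = 0) :
    ∃ ψ : ℝ × ℝ → ℝ, Differentiable ℝ ψ ∧
      ∀ p : ℝ × ℝ, fderiv ℝ ψ p (1, 0) = -v p ∧ fderiv ℝ ψ p (0, 1) = u p := by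
  have hcu : Continuous u := hu.continuous
  have hcv : Continuous v := hv.continuous
  have hdu : Differentiable ℝ u := hu.differentiable one_ne_zero
  have hdv : Differentiable ℝ v := hv.differentiable one_ne_zero
  have hcdu : Continuous (fderiv ℝ u) := hu.continuous_fderiv one_ne_zero
  set ψ : ℝ × ℝ → ℝ :=
    fun p => (∫ t in (0:ℝ)..p.2, u (p.1, t)) - ∫ s in (0:ℝ)..p.1, v (s, 0) with hψ
  have key : ∀ p₀ : ℝ × ℝ, HasFDerivAt ψ
      (((1 : ℝ →L[ℝ] ℝ).smulRight (-v p₀)).comp (fst ℝ ℝ ℝ)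
        + (snd ℝ ℝ ℝ).smulRight (u p₀)) p₀ := by
    rintro ⟨x₀, y₀⟩
    set A : ℝ → ℝ :=
      fun x => (∫ t in (0:ℝ)..y₀, u (x, t)) - ∫ s in (0:ℝ)..x, v (s, 0) with hA
    set B : ℝ × ℝ → ℝ := fun p => ∫ t in y₀..p.2, u (p.1, t) with hB
    have hsplit : ∀ p : ℝ × ℝ, ψ p = A p.1 + B p := by
      intro p
      have h1 : IntervalIntegrable (fun t => u (p.1, t)) volume 0 y₀ :=
        (hcu.comp (continuous_const.prodMk continuous_id)).intervalIntegrable _ _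
      have h2 : IntervalIntegrable (fun t => u (p.1, t)) volume y₀ p.2 :=
        (hcu.comp (continuous_const.prodMk continuous_id)).intervalIntegrable _ _
      simp only [hψ, hA, hB]
      rw [← integral_add_adjacent_intervals h1 h2]
      ring
    obtain ⟨C, hC⟩ := (isCompact_closedBall x₀ 1 |>.prod isCompact_uIcc).exists_bound_of_continuousOn
      (hcdu.continuousOn (s := closedBall x₀ 1 ×ˢ uIcc 0 y₀))
    have hA1 : HasDerivAt (fun x => ∫ t in (0:ℝ)..y₀, u (x, t))
        (∫ t in (0:ℝ)..y₀, fderiv ℝ u (x₀, t) (1, 0)) x₀ := by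
      have := (hasDerivAt_integral_of_dominated_loc_of_deriv_le (μ := volume)
        (F := fun x t => u (x, t)) (F' := fun x t => fderiv ℝ u (x, t) (1, 0))
        (x₀ := x₀) (a := 0) (b := y₀) (bound := fun _ => C) (s := ball x₀ 1) (ball_mem_nhds x₀ one_pos)
        (Filter.Eventually.of_forall fun x =>
          ((hcu.comp (continuous_const.prodMk continuous_id)).aestronglyMeasurable))
        ((hcu.comp (continuous_const.prodMk continuous_id)).intervalIntegrable _ _)
        ((hcdu.comp (continuous_const.prodMk continuous_id)).clm_apply
          continuous_const).aestronglyMeasurable ?_ intervalIntegrable_const ?_)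
      · exact this.2
      · refine Filter.Eventually.of_forall fun t ht x hx => ?_
        calc ‖fderiv ℝ u (x, t) (1, 0)‖ ≤ ‖fderiv ℝ u (x, t)‖ * ‖((1:ℝ), (0:ℝ))‖ :=
              le_opNorm _ _
          _ ≤ C * 1 := by
              refine mul_le_mul (hC _ ⟨ball_subset_closedBall hx,
                uIoc_subset_uIcc ht⟩) ?_ (norm_nonneg _) ?_
              · simp [Prod.norm_def]
              · exact le_trans (norm_nonneg _) (hC (x₀, 0) ⟨mem_closedBall_self zero_le_one, by
                  simp [uIcc_comm]⟩)
          _ = C := mul_one C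
      · exact Filter.Eventually.of_forall fun t _ x _ => slice_x u hdu x t
    have hA2 : HasDerivAt (fun x => ∫ s in (0:ℝ)..x, v (s, 0)) (v (x₀, 0)) x₀ :=
      ((hcv.comp (continuous_id.prodMk continuous_const)).integral_hasStrictDerivAt 0 x₀).hasDerivAt
    have hval : (∫ t in (0:ℝ)..y₀, fderiv ℝ u (x₀, t) (1, 0)) = -(v (x₀, y₀) - v (x₀, 0)) := by
      have h1 : ∀ t : ℝ, fderiv ℝ u (x₀, t) (1, 0) = -(fderiv ℝ v (x₀, t) (0, 1)) := by
        intro t; have := hdiv (x₀, t); linarith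
      have hcont : Continuous (fun t : ℝ => fderiv ℝ v (x₀, t) (0, 1)) :=
        ((hv.continuous_fderiv one_ne_zero).comp
          (continuous_const.prodMk continuous_id)).clm_apply continuous_const
      have h2 : (∫ t in (0:ℝ)..y₀, fderiv ℝ v (x₀, t) (0, 1)) = v (x₀, y₀) - v (x₀, 0) :=
        integral_eq_sub_of_hasDerivAt (fun t _ => slice_y v hdv x₀ t)
          (hcont.intervalIntegrable _ _)
      simp only [h1]
      rw [intervalIntegral.integral_neg, h2]
    have hAd : HasDerivAt A (-v (x₀, y₀)) x₀ := by
      have h := hA1.sub hA2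
      rw [hval] at h
      rw [show -v (x₀, y₀) = -(v (x₀, y₀) - v (x₀, 0)) - v (x₀, 0) by ring]
      exact h
    have hAfd : HasFDerivAt (fun p : ℝ × ℝ => A p.1)
        (((1 : ℝ →L[ℝ] ℝ).smulRight (-v (x₀, y₀))).comp (fst ℝ ℝ ℝ)) (x₀, y₀) :=
      by have := hAd.hasFDerivAt.comp (x₀, y₀) (hasFDerivAt_fst (𝕜 := ℝ))
         rwa [← smulRight_one_eq_toSpanSingleton] at this
    have hBfd : HasFDerivAt B ((snd ℝ ℝ ℝ).smulRight (u (x₀, y₀))) (x₀, y₀) := by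
      rw [hasFDerivAt_iff_isLittleO_nhds_zero]
      rw [Asymptotics.isLittleO_iff]
      intro c hc
      obtain ⟨δ, hδ, hδ'⟩ := Metric.continuousAt_iff.1 hcu.continuousAt (ε := c) hc
      have hev : ∀ᶠ h : ℝ × ℝ in nhds 0, ‖h‖ < δ :=
        Metric.eventually_nhds_iff_ball.2 ⟨δ, hδ, fun q hq => by
          simpa using mem_ball.1 hq⟩
      filter_upwards [hev] with h hp
      have hint : IntervalIntegrable (fun t => u (x₀ + h.1, t)) volume y₀ (y₀ + h.2) :=
        (hcu.comp (continuous_const.prodMk continuous_id)).intervalIntegrable _ _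
      have e1 : B ((x₀, y₀) + h) - B (x₀, y₀)
            - ((snd ℝ ℝ ℝ).smulRight (u (x₀, y₀))) h
          = ∫ t in y₀..(y₀ + h.2), (u (x₀ + h.1, t) - u (x₀, y₀)) := by
        rw [intervalIntegral.integral_sub hint intervalIntegrable_const]
        simp only [hB, intervalIntegral.integral_const, smulRight_apply, coe_snd',
          Prod.fst_add, Prod.snd_add, intervalIntegral.integral_same]
        simp [smul_eq_mul]
      rw [e1]
      have hb : ∀ t ∈ Ι y₀ (y₀ + h.2), ‖u (x₀ + h.1, t) - u (x₀, y₀)‖ ≤ c := by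
        intro t ht
        have h1 : |t - y₀| ≤ |h.2| := by
          have := uIoc_abs_le ht
          simpa using this
        have h2 : |h.2| ≤ ‖h‖ := by
          simpa [Real.norm_eq_abs] using norm_snd_le h
        have hd : dist (x₀ + h.1, t) (x₀, y₀) < δ := by
          rw [Prod.dist_eq]
          refine max_lt ?_ ?_
          · have h3 : |h.1| ≤ ‖h‖ := by
              simpa [Real.norm_eq_abs] using norm_fst_le h
            rw [Real.dist_eq]
            simpa using lt_of_le_of_lt h3 hp
          · rw [Real.dist_eq]
            exact lt_of_le_of_lt (h1.trans h2) hp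
        exact le_of_lt (hδ' hd)
      calc ‖∫ t in y₀..(y₀ + h.2), (u (x₀ + h.1, t) - u (x₀, y₀))‖
            ≤ c * |y₀ + h.2 - y₀| :=
            intervalIntegral.norm_integral_le_of_norm_le_const hb
        _ ≤ c * ‖h‖ := by
            refine mul_le_mul_of_nonneg_left ?_ (le_of_lt hc)
            have h2 : |h.2| ≤ ‖h‖ := by
              simpa [Real.norm_eq_abs] using norm_snd_le h
            simpa using h2
    exact (hAfd.add hBfd).congr_of_eventuallyEq
      (Filter.Eventually.of_forall fun p => hsplit p)
  refine ⟨ψ, fun p => (key p).differentiableAt, fun p => ?_⟩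
  rw [(key p).fderiv]
  constructor <;>
    simp [ContinuousLinearMap.add_apply, ContinuousLinearMap.comp_apply,
      ContinuousLinearMap.smulRight_apply]
end

section
/- Fix an integer N ≥ 3, a real h > 0, and a boundary velocity s ∈ ℝ. Then there exists exactly one pair of grid functions (ψ, ω), ψ, ω : (Fin N × Fin N) → ℝ, satisfying all of the following: (i) for every interior point (i,j): −4ψ_{i,j} + ψ_{i+1,j} + ψ_{i−1,j} + ψ_{i,j+1} + ψ_{i,j−1} + h²·ω_{i,j} = 0; (ii) for every interior point (i,j): −4ω_{i,j} + ω_{i+1,j} + ω_{i−1,j} + ω_{i,j+1} + ω_{i,j−1} = 0; (iii) ψ_{i,j} = 0 at every boundary point; (iv) for 2 ≤ j ≤ N−1: ω_{1,j} = −2ψ_{2,j}/h² and ω_{N,j} = −2ψ_{N−1,j}/h²; for 2 ≤ i ≤ N−1: ω_{i,1} = −2ψ_{i,2}/h² and ω_{i,N} = −(2ψ_{i,N−1} + 2sh)/h²; (v) ω = 0 at the four corner points (1,1), (1,N), (N,1), (N,N). That is, the discrete steady cavity flow problem with Reynolds number R = 0 admits a unique solution. -/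
set_option maxHeartbeats 1000000


open Finset

lemma abel1 (a b : ℕ → ℝ) : ∀ N : ℕ, 3 ≤ N →
    ∑ i ∈ Icc 2 (N-1), a i * (b (i+1) + b (i-1) - 2 * b i)
    = -∑ i ∈ Icc 1 (N-1), (a (i+1) - a i) * (b (i+1) - b i)
      + a N * (b N - b (N-1)) - a 1 * (b 2 - b 1) := by
  intro N hN
  induction N, hN using Nat.le_induction with
  | base =>
    rw [show (3:ℕ)-1 = 2 from rfl, show Icc 2 2 = {2} from rfl,
      show (Icc 1 2 : Finset ℕ) = {1, 2} from rfl]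
    rw [Finset.sum_insert (by decide), Finset.sum_singleton, Finset.sum_singleton]
    norm_num; ring
  | succ n hn IH =>
    obtain ⟨m, rfl⟩ : ∃ m, n = m + 3 := ⟨n - 3, by omega⟩
    rw [show m+3+1-1 = (m+2)+1 from rfl,
      Finset.sum_Icc_succ_top (show 2 ≤ (m+2)+1 by omega),
      Finset.sum_Icc_succ_top (show 1 ≤ (m+2)+1 by omega)]
    rw [show m+3-1 = (m+1)+1 from rfl] at IH
    simp only [show m+2+1 = m+3 from rfl, show m+1+1 = m+2 from rfl,
      show m+3-1 = m+2 from rfl, show m+2-1 = m+1 from rfl,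
      show m+3+1-1 = m+3 from rfl, show m+3+1 = m+4 from rfl] at *
    linear_combination IH

lemma row_abel {N : ℕ} (hN : 3 ≤ N) (u v : ℕ → ℕ → ℝ) (j : ℕ) :
    ∑ i ∈ Icc 2 (N-1), u i j * (v (i+1) j + v (i-1) j - 2 * v i j)
    = -∑ i ∈ Icc 1 (N-1), (u (i+1) j - u i j) * (v (i+1) j - v i j)
      + u N j * (v N j - v (N-1) j) - u 1 j * (v 2 j - v 1 j) :=
  abel1 (fun i => u i j) (fun i => v i j) N hN

lemma col_abel {N : ℕ} (hN : 3 ≤ N) (u v : ℕ → ℕ → ℝ) (i : ℕ) :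
    ∑ j ∈ Icc 2 (N-1), u i j * (v i (j+1) + v i (j-1) - 2 * v i j)
    = -∑ j ∈ Icc 1 (N-1), (u i (j+1) - u i j) * (v i (j+1) - v i j)
      + u i N * (v i N - v i (N-1)) - u i 1 * (v i 2 - v i 1) :=
  abel1 (fun j => u i j) (fun j => v i j) N hN

lemma core (N : ℕ) (hN : 3 ≤ N) (h : ℝ) (hh : 0 < h) (ψ ω : ℕ → ℕ → ℝ)
    (hi : ∀ i ∈ Icc 2 (N-1), ∀ j ∈ Icc 2 (N-1),
      -4 * ψ i j + ψ (i+1) j + ψ (i-1) j + ψ i (j+1) + ψ i (j-1) + h ^ 2 * ω i j = 0)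
    (hii : ∀ i ∈ Icc 2 (N-1), ∀ j ∈ Icc 2 (N-1),
      -4 * ω i j + ω (i+1) j + ω (i-1) j + ω i (j+1) + ω i (j-1) = 0)
    (hiii : ∀ i ∈ Icc 1 N, ∀ j ∈ Icc 1 N, (i = 1 ∨ i = N ∨ j = 1 ∨ j = N) → ψ i j = 0)
    (hiv1 : ∀ j ∈ Icc 2 (N-1), ω 1 j = -2 * ψ 2 j / h ^ 2)
    (hiv2 : ∀ j ∈ Icc 2 (N-1), ω N j = -2 * ψ (N-1) j / h ^ 2)
    (hiv3 : ∀ i ∈ Icc 2 (N-1), ω i 1 = -2 * ψ i 2 / h ^ 2)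
    (hiv4 : ∀ i ∈ Icc 2 (N-1), ω i N = -2 * ψ i (N-1) / h ^ 2)
    (hv1 : ω 1 1 = 0) (hv2 : ω 1 N = 0) (hv3 : ω N 1 = 0) (hv4 : ω N N = 0) :
    ∀ i ∈ Icc 1 N, ∀ j ∈ Icc 1 N, ψ i j = 0 ∧ ω i j = 0 := by
  have hh2 : (h:ℝ)^2 ≠ 0 := by positivity
  have hmem : ∀ k, k ∈ Icc 2 (N-1) → k ∈ Icc 1 N := by
    intro k hk; simp only [mem_Icc] at *; omega
  have h1N : (1:ℕ) ∈ Icc 1 N := by simp only [mem_Icc]; omega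
  have hNN : N ∈ Icc 1 N := by simp only [mem_Icc]; omega
  have z1 : ∀ j ∈ Icc 1 N, ψ 1 j = 0 := fun j hj => hiii 1 h1N j hj (Or.inl rfl)
  have zN : ∀ j ∈ Icc 1 N, ψ N j = 0 := fun j hj => hiii N hNN j hj (Or.inr (Or.inl rfl))
  have w1 : ∀ i ∈ Icc 1 N, ψ i 1 = 0 := fun i hi' => hiii i hi' 1 h1N (Or.inr (Or.inr (Or.inl rfl)))
  have wN : ∀ i ∈ Icc 1 N, ψ i N = 0 := fun i hi' => hiii i hi' N hNN (Or.inr (Or.inr (Or.inr rfl)))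
  -- step 1 : XQ + YQ = 0
  have e1 : ∑ j ∈ Icc 2 (N-1), ∑ i ∈ Icc 2 (N-1), ψ i j * (ω (i+1) j + ω (i-1) j - 2 * ω i j)
      = -∑ j ∈ Icc 2 (N-1), ∑ i ∈ Icc 1 (N-1), (ψ (i+1) j - ψ i j) * (ω (i+1) j - ω i j) := by
    rw [← Finset.sum_neg_distrib]
    refine Finset.sum_congr rfl (fun j hj => ?_)
    have A := row_abel hN ψ ω j
    rw [z1 j (hmem j hj), zN j (hmem j hj)] at A
    linear_combination A
  have e2 : ∑ i ∈ Icc 2 (N-1), ∑ j ∈ Icc 2 (N-1), ψ i j * (ω i (j+1) + ω i (j-1) - 2 * ω i j)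
      = -∑ i ∈ Icc 2 (N-1), ∑ j ∈ Icc 1 (N-1), (ψ i (j+1) - ψ i j) * (ω i (j+1) - ω i j) := by
    rw [← Finset.sum_neg_distrib]
    refine Finset.sum_congr rfl (fun i hi' => ?_)
    have A := col_abel hN ψ ω i
    rw [w1 i (hmem i hi'), wN i (hmem i hi')] at A
    linear_combination A
  have e3 : ∑ j ∈ Icc 2 (N-1), ∑ i ∈ Icc 2 (N-1), ψ i j * (ω (i+1) j + ω (i-1) j - 2 * ω i j)
      + ∑ i ∈ Icc 2 (N-1), ∑ j ∈ Icc 2 (N-1), ψ i j * (ω i (j+1) + ω i (j-1) - 2 * ω i j) = 0 := by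
    rw [Finset.sum_comm (s := Icc 2 (N-1)) (t := Icc 2 (N-1))
      (f := fun i j => ψ i j * (ω i (j+1) + ω i (j-1) - 2 * ω i j)),
      ← Finset.sum_add_distrib]
    refine Finset.sum_eq_zero (fun j hj => ?_)
    rw [← Finset.sum_add_distrib]
    refine Finset.sum_eq_zero (fun i hi' => ?_)
    linear_combination ψ i j * hii i hi' j hj
  -- step 2 : T identities
  have t1 : ∑ j ∈ Icc 2 (N-1), ∑ i ∈ Icc 2 (N-1), ω i j * (ψ (i+1) j + ψ (i-1) j - 2 * ψ i j)
      = -∑ j ∈ Icc 2 (N-1), ∑ i ∈ Icc 1 (N-1), (ψ (i+1) j - ψ i j) * (ω (i+1) j - ω i j)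
        + h^2/2 * ∑ j ∈ Icc 2 (N-1), ((ω 1 j)^2 + (ω N j)^2) := by
    rw [← Finset.sum_neg_distrib, Finset.mul_sum, ← Finset.sum_add_distrib]
    refine Finset.sum_congr rfl (fun j hj => ?_)
    have A := row_abel hN ω ψ j
    have hX : ∑ i ∈ Icc 1 (N-1), (ω (i+1) j - ω i j) * (ψ (i+1) j - ψ i j)
        = ∑ i ∈ Icc 1 (N-1), (ψ (i+1) j - ψ i j) * (ω (i+1) j - ω i j) :=
      Finset.sum_congr rfl fun i _ => mul_comm _ _
    have p2 : ψ 2 j = -(h^2 * ω 1 j) / 2 := by rw [hiv1 j hj]; field_simp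
    have pN : ψ (N-1) j = -(h^2 * ω N j) / 2 := by rw [hiv2 j hj]; field_simp
    rw [z1 j (hmem j hj), zN j (hmem j hj), p2, pN] at A
    linear_combination A - hX
  have t2 : ∑ i ∈ Icc 2 (N-1), ∑ j ∈ Icc 2 (N-1), ω i j * (ψ i (j+1) + ψ i (j-1) - 2 * ψ i j)
      = -∑ i ∈ Icc 2 (N-1), ∑ j ∈ Icc 1 (N-1), (ψ i (j+1) - ψ i j) * (ω i (j+1) - ω i j)
        + h^2/2 * ∑ i ∈ Icc 2 (N-1), ((ω i 1)^2 + (ω i N)^2) := by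
    rw [← Finset.sum_neg_distrib, Finset.mul_sum, ← Finset.sum_add_distrib]
    refine Finset.sum_congr rfl (fun i hi' => ?_)
    have A := col_abel hN ω ψ i
    have hX : ∑ j ∈ Icc 1 (N-1), (ω i (j+1) - ω i j) * (ψ i (j+1) - ψ i j)
        = ∑ j ∈ Icc 1 (N-1), (ψ i (j+1) - ψ i j) * (ω i (j+1) - ω i j) :=
      Finset.sum_congr rfl fun j _ => mul_comm _ _
    have p2 : ψ i 2 = -(h^2 * ω i 1) / 2 := by rw [hiv3 i hi']; field_simp
    have pN : ψ i (N-1) = -(h^2 * ω i N) / 2 := by rw [hiv4 i hi']; field_simp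
    rw [w1 i (hmem i hi'), wN i (hmem i hi'), p2, pN] at A
    linear_combination A - hX
  have t3 : ∑ j ∈ Icc 2 (N-1), ∑ i ∈ Icc 2 (N-1), ω i j * (ψ (i+1) j + ψ (i-1) j - 2 * ψ i j)
      + ∑ i ∈ Icc 2 (N-1), ∑ j ∈ Icc 2 (N-1), ω i j * (ψ i (j+1) + ψ i (j-1) - 2 * ψ i j)
      = -h^2 * ∑ j ∈ Icc 2 (N-1), ∑ i ∈ Icc 2 (N-1), (ω i j)^2 := by
    rw [Finset.sum_comm (s := Icc 2 (N-1)) (t := Icc 2 (N-1))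
      (f := fun i j => ω i j * (ψ i (j+1) + ψ i (j-1) - 2 * ψ i j)),
      Finset.mul_sum, ← Finset.sum_add_distrib]
    refine Finset.sum_congr rfl (fun j hj => ?_)
    rw [Finset.mul_sum, ← Finset.sum_add_distrib]
    refine Finset.sum_congr rfl (fun i hi' => ?_)
    linear_combination ω i j * hi i hi' j hj
  -- combine : Q + Bx/2 + By/2 = 0
  have key : ∑ j ∈ Icc 2 (N-1), ∑ i ∈ Icc 2 (N-1), (ω i j)^2
      + (1/2) * ∑ j ∈ Icc 2 (N-1), ((ω 1 j)^2 + (ω N j)^2)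
      + (1/2) * ∑ i ∈ Icc 2 (N-1), ((ω i 1)^2 + (ω i N)^2) = 0 := by
    have comb : -h^2 * (∑ j ∈ Icc 2 (N-1), ∑ i ∈ Icc 2 (N-1), (ω i j)^2)
        = h^2/2 * ∑ j ∈ Icc 2 (N-1), ((ω 1 j)^2 + (ω N j)^2)
          + h^2/2 * ∑ i ∈ Icc 2 (N-1), ((ω i 1)^2 + (ω i N)^2) := by
      linear_combination t1 + t2 - t3 - e1 - e2 + e3
    refine mul_left_cancel₀ hh2 ?_
    rw [mul_zero]
    linear_combination -comb
  -- extract pointwise vanishing of ω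
  have hQ0 : ∑ j ∈ Icc 2 (N-1), ∑ i ∈ Icc 2 (N-1), (ω i j)^2 = 0 := by
    have b1 : (0:ℝ) ≤ ∑ j ∈ Icc 2 (N-1), ∑ i ∈ Icc 2 (N-1), (ω i j)^2 :=
      Finset.sum_nonneg fun j _ => Finset.sum_nonneg fun i _ => sq_nonneg _
    have b2 : (0:ℝ) ≤ ∑ j ∈ Icc 2 (N-1), ((ω 1 j)^2 + (ω N j)^2) :=
      Finset.sum_nonneg fun j _ => by positivity
    have b3 : (0:ℝ) ≤ ∑ i ∈ Icc 2 (N-1), ((ω i 1)^2 + (ω i N)^2) :=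
      Finset.sum_nonneg fun i _ => by positivity
    linarith
  have hBx0 : ∑ j ∈ Icc 2 (N-1), ((ω 1 j)^2 + (ω N j)^2) = 0 := by
    have b1 : (0:ℝ) ≤ ∑ j ∈ Icc 2 (N-1), ∑ i ∈ Icc 2 (N-1), (ω i j)^2 :=
      Finset.sum_nonneg fun j _ => Finset.sum_nonneg fun i _ => sq_nonneg _
    have b2 : (0:ℝ) ≤ ∑ j ∈ Icc 2 (N-1), ((ω 1 j)^2 + (ω N j)^2) :=
      Finset.sum_nonneg fun j _ => by positivity
    have b3 : (0:ℝ) ≤ ∑ i ∈ Icc 2 (N-1), ((ω i 1)^2 + (ω i N)^2) :=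
      Finset.sum_nonneg fun i _ => by positivity
    linarith
  have hBy0 : ∑ i ∈ Icc 2 (N-1), ((ω i 1)^2 + (ω i N)^2) = 0 := by
    have b1 : (0:ℝ) ≤ ∑ j ∈ Icc 2 (N-1), ∑ i ∈ Icc 2 (N-1), (ω i j)^2 :=
      Finset.sum_nonneg fun j _ => Finset.sum_nonneg fun i _ => sq_nonneg _
    have b2 : (0:ℝ) ≤ ∑ j ∈ Icc 2 (N-1), ((ω 1 j)^2 + (ω N j)^2) :=
      Finset.sum_nonneg fun j _ => by positivity
    linarith
  have hωint : ∀ i ∈ Icc 2 (N-1), ∀ j ∈ Icc 2 (N-1), ω i j = 0 := by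
    intro i hi' j hj
    have h1 := (Finset.sum_eq_zero_iff_of_nonneg
      (fun j _ => Finset.sum_nonneg fun i _ => sq_nonneg (ω i j))).mp hQ0 j hj
    have h2 := (Finset.sum_eq_zero_iff_of_nonneg
      (fun i _ => sq_nonneg (ω i j))).mp h1 i hi'
    exact pow_eq_zero_iff (n := 2) (by norm_num) |>.mp h2
  have hωx : ∀ j ∈ Icc 2 (N-1), ω 1 j = 0 ∧ ω N j = 0 := by
    intro j hj
    have hnn : ∀ k ∈ Icc 2 (N-1), (0:ℝ) ≤ (ω 1 k)^2 + (ω N k)^2 := by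
      intro k _; positivity
    have h1 := (Finset.sum_eq_zero_iff_of_nonneg hnn).mp hBx0 j hj
    constructor <;> nlinarith [sq_nonneg (ω 1 j), sq_nonneg (ω N j)]
  have hωy : ∀ i ∈ Icc 2 (N-1), ω i 1 = 0 ∧ ω i N = 0 := by
    intro i hi'
    have hnn : ∀ k ∈ Icc 2 (N-1), (0:ℝ) ≤ (ω k 1)^2 + (ω k N)^2 := by
      intro k _; positivity
    have h1 := (Finset.sum_eq_zero_iff_of_nonneg hnn).mp hBy0 i hi'
    constructor <;> nlinarith [sq_nonneg (ω i 1), sq_nonneg (ω i N)]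
  have hω : ∀ i ∈ Icc 1 N, ∀ j ∈ Icc 1 N, ω i j = 0 := by
    intro i hi' j hj
    simp only [mem_Icc] at hi' hj
    have ci : i = 1 ∨ i = N ∨ (2 ≤ i ∧ i ≤ N - 1) := by omega
    have cj : j = 1 ∨ j = N ∨ (2 ≤ j ∧ j ≤ N - 1) := by omega
    have mi : ∀ k : ℕ, 2 ≤ k → k ≤ N - 1 → k ∈ Icc 2 (N-1) := by
      intro k a b; simp only [mem_Icc]; omega
    rcases ci with rfl | rfl | ⟨a1, a2⟩
    · rcases cj with rfl | rfl | ⟨b1, b2⟩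
      · exact hv1
      · exact hv2
      · exact (hωx j (mi j b1 b2)).1
    · rcases cj with rfl | rfl | ⟨b1, b2⟩
      · exact hv3
      · exact hv4
      · exact (hωx j (mi j b1 b2)).2
    · rcases cj with rfl | rfl | ⟨b1, b2⟩
      · exact (hωy i (mi i a1 a2)).1
      · exact (hωy i (mi i a1 a2)).2
      · exact hωint i (mi i a1 a2) j (mi j b1 b2)
  -- now the ψ part
  have p1 : ∑ j ∈ Icc 2 (N-1), ∑ i ∈ Icc 2 (N-1), ψ i j * (ψ (i+1) j + ψ (i-1) j - 2 * ψ i j)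
      = -∑ j ∈ Icc 2 (N-1), ∑ i ∈ Icc 1 (N-1), (ψ (i+1) j - ψ i j) * (ψ (i+1) j - ψ i j) := by
    rw [← Finset.sum_neg_distrib]
    refine Finset.sum_congr rfl (fun j hj => ?_)
    have A := row_abel hN ψ ψ j
    rw [z1 j (hmem j hj), zN j (hmem j hj)] at A
    linear_combination A
  have p2 : ∑ i ∈ Icc 2 (N-1), ∑ j ∈ Icc 2 (N-1), ψ i j * (ψ i (j+1) + ψ i (j-1) - 2 * ψ i j)
      = -∑ i ∈ Icc 2 (N-1), ∑ j ∈ Icc 1 (N-1), (ψ i (j+1) - ψ i j) * (ψ i (j+1) - ψ i j) := by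
    rw [← Finset.sum_neg_distrib]
    refine Finset.sum_congr rfl (fun i hi' => ?_)
    have A := col_abel hN ψ ψ i
    rw [w1 i (hmem i hi'), wN i (hmem i hi')] at A
    linear_combination A
  have p3 : ∑ j ∈ Icc 2 (N-1), ∑ i ∈ Icc 2 (N-1), ψ i j * (ψ (i+1) j + ψ (i-1) j - 2 * ψ i j)
      + ∑ i ∈ Icc 2 (N-1), ∑ j ∈ Icc 2 (N-1), ψ i j * (ψ i (j+1) + ψ i (j-1) - 2 * ψ i j) = 0 := by
    rw [Finset.sum_comm (s := Icc 2 (N-1)) (t := Icc 2 (N-1))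
      (f := fun i j => ψ i j * (ψ i (j+1) + ψ i (j-1) - 2 * ψ i j)),
      ← Finset.sum_add_distrib]
    refine Finset.sum_eq_zero (fun j hj => ?_)
    rw [← Finset.sum_add_distrib]
    refine Finset.sum_eq_zero (fun i hi' => ?_)
    have hz := hωint i hi' j hj
    linear_combination ψ i j * hi i hi' j hj - h^2 * ψ i j * hz
  have hXP0 : ∑ j ∈ Icc 2 (N-1), ∑ i ∈ Icc 1 (N-1), (ψ (i+1) j - ψ i j) * (ψ (i+1) j - ψ i j) = 0 := by
    have b1 : (0:ℝ) ≤ ∑ j ∈ Icc 2 (N-1), ∑ i ∈ Icc 1 (N-1), (ψ (i+1) j - ψ i j) * (ψ (i+1) j - ψ i j) :=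
      Finset.sum_nonneg fun j _ => Finset.sum_nonneg fun i _ => mul_self_nonneg _
    have b2 : (0:ℝ) ≤ ∑ i ∈ Icc 2 (N-1), ∑ j ∈ Icc 1 (N-1), (ψ i (j+1) - ψ i j) * (ψ i (j+1) - ψ i j) :=
      Finset.sum_nonneg fun i _ => Finset.sum_nonneg fun j _ => mul_self_nonneg _
    linarith
  have hstep : ∀ j ∈ Icc 2 (N-1), ∀ i ∈ Icc 1 (N-1), ψ (i+1) j = ψ i j := by
    intro j hj i hi'
    have h1 := (Finset.sum_eq_zero_iff_of_nonneg
      (fun j _ => Finset.sum_nonneg fun i _ => mul_self_nonneg (ψ (i+1) j - ψ i j))).mp hXP0 j hj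
    have h2 := (Finset.sum_eq_zero_iff_of_nonneg
      (fun i _ => mul_self_nonneg (ψ (i+1) j - ψ i j))).mp h1 i hi'
    have := mul_self_eq_zero.mp h2
    linarith
  have hψ : ∀ i ∈ Icc 1 N, ∀ j ∈ Icc 1 N, ψ i j = 0 := by
    intro i hi' j hj
    simp only [mem_Icc] at hi' hj
    by_cases hjb : j = 1 ∨ j = N
    · exact hiii i (by simp only [mem_Icc]; omega) j (by simp only [mem_Icc]; omega)
        (Or.inr (Or.inr hjb))
    · have hjint : j ∈ Icc 2 (N-1) := by simp only [mem_Icc]; omega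
      have main : ∀ k : ℕ, 1 ≤ k → k ≤ N → ψ k j = 0 := by
        intro k
        induction k with
        | zero => omega
        | succ n ih =>
          intro hk1 hk2
          by_cases hn : n = 0
          · subst hn
            exact hiii 1 h1N j (by simp only [mem_Icc]; omega) (Or.inl rfl)
          · have hni : n ∈ Icc 1 (N-1) := by simp only [mem_Icc]; omega
            rw [hstep j hjint n hni]
            exact ih (by omega) (by omega)
      exact main i hi'.1 hi'.2
  intro i hi' j hj
  exact ⟨hψ i hi' j hj, hω i hi' j hj⟩



lemma gridIdx_succ {N : ℕ} (hN : 3 ≤ N) (a : Fin N) : gridIdx hN (a.val + 1) = a := by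
  apply Fin.ext
  simp only [gridIdx, Nat.add_sub_cancel]
  exact Nat.mod_eq_of_lt a.isLt

lemma gridIdx_val {N : ℕ} (hN : 3 ≤ N) {i : ℕ} (h2 : i ≤ N) : (gridIdx hN i).val = i - 1 := by
  simp only [gridIdx]
  exact Nat.mod_eq_of_lt (by omega)

def Fone (N : ℕ) (hN : 3 ≤ N) (h : ℝ)
    (p : ((Fin N × Fin N) → ℝ) × ((Fin N × Fin N) → ℝ)) (q : Fin N × Fin N) : ℝ :=
  if 2 ≤ q.1.val + 1 ∧ q.1.val + 1 ≤ N-1 ∧ 2 ≤ q.2.val + 1 ∧ q.2.val + 1 ≤ N-1 then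
    -4 * p.1 (gridIdx hN (q.1.val+1), gridIdx hN (q.2.val+1))
      + p.1 (gridIdx hN (q.1.val+1+1), gridIdx hN (q.2.val+1))
      + p.1 (gridIdx hN (q.1.val+1-1), gridIdx hN (q.2.val+1))
      + p.1 (gridIdx hN (q.1.val+1), gridIdx hN (q.2.val+1+1))
      + p.1 (gridIdx hN (q.1.val+1), gridIdx hN (q.2.val+1-1))
      + h^2 * p.2 (gridIdx hN (q.1.val+1), gridIdx hN (q.2.val+1))
  else p.1 q

noncomputable def Ftwo (N : ℕ) (hN : 3 ≤ N) (h : ℝ)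
    (p : ((Fin N × Fin N) → ℝ) × ((Fin N × Fin N) → ℝ)) (q : Fin N × Fin N) : ℝ :=
  if 2 ≤ q.1.val + 1 ∧ q.1.val + 1 ≤ N-1 ∧ 2 ≤ q.2.val + 1 ∧ q.2.val + 1 ≤ N-1 then
    -4 * p.2 (gridIdx hN (q.1.val+1), gridIdx hN (q.2.val+1))
      + p.2 (gridIdx hN (q.1.val+1+1), gridIdx hN (q.2.val+1))
      + p.2 (gridIdx hN (q.1.val+1-1), gridIdx hN (q.2.val+1))
      + p.2 (gridIdx hN (q.1.val+1), gridIdx hN (q.2.val+1+1))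
      + p.2 (gridIdx hN (q.1.val+1), gridIdx hN (q.2.val+1-1))
  else if q.1.val + 1 = 1 ∧ 2 ≤ q.2.val + 1 ∧ q.2.val + 1 ≤ N-1 then
    p.2 (gridIdx hN 1, gridIdx hN (q.2.val+1)) + 2 * p.1 (gridIdx hN 2, gridIdx hN (q.2.val+1)) / h^2
  else if q.1.val + 1 = N ∧ 2 ≤ q.2.val + 1 ∧ q.2.val + 1 ≤ N-1 then
    p.2 (gridIdx hN N, gridIdx hN (q.2.val+1)) + 2 * p.1 (gridIdx hN (N-1), gridIdx hN (q.2.val+1)) / h^2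
  else if 2 ≤ q.1.val + 1 ∧ q.1.val + 1 ≤ N-1 ∧ q.2.val + 1 = 1 then
    p.2 (gridIdx hN (q.1.val+1), gridIdx hN 1) + 2 * p.1 (gridIdx hN (q.1.val+1), gridIdx hN 2) / h^2
  else if 2 ≤ q.1.val + 1 ∧ q.1.val + 1 ≤ N-1 ∧ q.2.val + 1 = N then
    p.2 (gridIdx hN (q.1.val+1), gridIdx hN N) + 2 * p.1 (gridIdx hN (q.1.val+1), gridIdx hN (N-1)) / h^2
  else p.2 q

noncomputable def cavityL (N : ℕ) (hN : 3 ≤ N) (h : ℝ) :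
    (((Fin N × Fin N) → ℝ) × ((Fin N × Fin N) → ℝ)) →ₗ[ℝ]
    (((Fin N × Fin N) → ℝ) × ((Fin N × Fin N) → ℝ)) where
  toFun p := (fun q => Fone N hN h p q, fun q => Ftwo N hN h p q)
  map_add' p p' := by
    apply Prod.ext <;> funext q <;>
      simp only [Fone, Ftwo, Prod.fst_add, Prod.snd_add, Pi.add_apply] <;>
      split_ifs <;> ring
  map_smul' r p := by
    apply Prod.ext <;> funext q <;>
      simp only [Fone, Ftwo, Prod.smul_fst, Prod.smul_snd, Pi.smul_apply, smul_eq_mul,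
        RingHom.id_apply] <;>
      split_ifs <;> ring

noncomputable def cVec (N : ℕ) (h s : ℝ) :
    ((Fin N × Fin N) → ℝ) × ((Fin N × Fin N) → ℝ) :=
  (fun _ => 0, fun q => if 2 ≤ q.1.val + 1 ∧ q.1.val + 1 ≤ N-1 ∧ q.2.val + 1 = N
    then -(2*s*h)/h^2 else 0)

lemma equiv_iff (N : ℕ) (hN : 3 ≤ N) (h : ℝ) (hh : 0 < h) (s : ℝ)
    (p : ((Fin N × Fin N) → ℝ) × ((Fin N × Fin N) → ℝ)) :
    ((∀ i ∈ Finset.Icc 2 (N-1), ∀ j ∈ Finset.Icc 2 (N-1),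
        -4 * p.1 (gridIdx hN i, gridIdx hN j) + p.1 (gridIdx hN (i+1), gridIdx hN j)
          + p.1 (gridIdx hN (i-1), gridIdx hN j) + p.1 (gridIdx hN i, gridIdx hN (j+1))
          + p.1 (gridIdx hN i, gridIdx hN (j-1))
          + h ^ 2 * p.2 (gridIdx hN i, gridIdx hN j) = 0)
      ∧ (∀ i ∈ Finset.Icc 2 (N-1), ∀ j ∈ Finset.Icc 2 (N-1),
        -4 * p.2 (gridIdx hN i, gridIdx hN j) + p.2 (gridIdx hN (i+1), gridIdx hN j)
          + p.2 (gridIdx hN (i-1), gridIdx hN j) + p.2 (gridIdx hN i, gridIdx hN (j+1))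
          + p.2 (gridIdx hN i, gridIdx hN (j-1)) = 0)
      ∧ (∀ i ∈ Finset.Icc 1 N, ∀ j ∈ Finset.Icc 1 N,
          (i = 1 ∨ i = N ∨ j = 1 ∨ j = N) → p.1 (gridIdx hN i, gridIdx hN j) = 0)
      ∧ (∀ j ∈ Finset.Icc 2 (N-1),
          p.2 (gridIdx hN 1, gridIdx hN j) = -2 * p.1 (gridIdx hN 2, gridIdx hN j) / h ^ 2)
      ∧ (∀ j ∈ Finset.Icc 2 (N-1),
          p.2 (gridIdx hN N, gridIdx hN j) = -2 * p.1 (gridIdx hN (N-1), gridIdx hN j) / h ^ 2)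
      ∧ (∀ i ∈ Finset.Icc 2 (N-1),
          p.2 (gridIdx hN i, gridIdx hN 1) = -2 * p.1 (gridIdx hN i, gridIdx hN 2) / h ^ 2)
      ∧ (∀ i ∈ Finset.Icc 2 (N-1),
          p.2 (gridIdx hN i, gridIdx hN N)
            = -(2 * p.1 (gridIdx hN i, gridIdx hN (N-1)) + 2 * s * h) / h ^ 2)
      ∧ p.2 (gridIdx hN 1, gridIdx hN 1) = 0
      ∧ p.2 (gridIdx hN 1, gridIdx hN N) = 0
      ∧ p.2 (gridIdx hN N, gridIdx hN 1) = 0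
      ∧ p.2 (gridIdx hN N, gridIdx hN N) = 0)
    ↔ cavityL N hN h p = cVec N h s := by
  have hh2 : (h:ℝ)^2 ≠ 0 := by positivity
  have hval : ∀ k : ℕ, 1 ≤ k → k ≤ N → (gridIdx hN k).val + 1 = k := by
    intro k a b; rw [gridIdx_val hN b]; omega
  constructor
  · rintro ⟨H1, H2, H3, H4, H5, H6, H7, H8, H9, H10, H11⟩
    apply Prod.ext
    · funext q
      have hq1 : q.1.val + 1 ≤ N := q.1.isLt
      have hq2 : q.2.val + 1 ≤ N := q.2.isLt
      show Fone N hN h p q = 0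
      unfold Fone
      split_ifs with hc
      · exact H1 (q.1.val+1) (mem_Icc.mpr ⟨hc.1, hc.2.1⟩) (q.2.val+1)
          (mem_Icc.mpr ⟨hc.2.2.1, hc.2.2.2⟩)
      · have e := H3 (q.1.val+1) (mem_Icc.mpr (by omega)) (q.2.val+1)
          (mem_Icc.mpr (by omega)) (by omega)
        rw [gridIdx_succ hN, gridIdx_succ hN] at e
        exact e
    · funext q
      have hq1 : q.1.val + 1 ≤ N := q.1.isLt
      have hq2 : q.2.val + 1 ≤ N := q.2.isLt
      show Ftwo N hN h p q
        = if 2 ≤ q.1.val + 1 ∧ q.1.val + 1 ≤ N-1 ∧ q.2.val + 1 = N then -(2*s*h)/h^2 else 0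
      unfold Ftwo
      split_ifs with c1 c2 c3 c4 c5 c6 c7 c8 c9 c10 c11
      all_goals try (exfalso; omega)
      · exact H2 (q.1.val+1) (mem_Icc.mpr ⟨c1.1, c1.2.1⟩) (q.2.val+1)
          (mem_Icc.mpr ⟨c1.2.2.1, c1.2.2.2⟩)
      · linear_combination H4 (q.2.val+1) (mem_Icc.mpr ⟨c3.2.1, c3.2.2⟩)
      · linear_combination H5 (q.2.val+1) (mem_Icc.mpr ⟨c5.2.1, c5.2.2⟩)
      · linear_combination H6 (q.1.val+1) (mem_Icc.mpr ⟨c7.1, c7.2.1⟩)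
      · linear_combination H7 (q.1.val+1) (mem_Icc.mpr ⟨c9.1, c9.2.1⟩)
      · -- corner case
        have hcor : (q.1.val+1 = 1 ∨ q.1.val+1 = N) ∧ (q.2.val+1 = 1 ∨ q.2.val+1 = N) := by
          omega
        have e1 : ∀ k, q.1.val + 1 = k → gridIdx hN k = q.1 := by
          intro k hk; rw [← hk]; exact gridIdx_succ hN q.1
        have e2 : ∀ k, q.2.val + 1 = k → gridIdx hN k = q.2 := by
          intro k hk; rw [← hk]; exact gridIdx_succ hN q.2
        rw [← Prod.mk.eta (p := q)]
        rcases hcor with ⟨ha | ha, hb | hb⟩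
        · rw [← e1 1 ha, ← e2 1 hb]; exact H8
        · rw [← e1 1 ha, ← e2 N hb]; exact H9
        · rw [← e1 N ha, ← e2 1 hb]; exact H10
        · rw [← e1 N ha, ← e2 N hb]; exact H11
  · intro hL
    have hF := congrArg Prod.fst hL
    have hS := congrArg Prod.snd hL
    simp only [cavityL, cVec, LinearMap.coe_mk, AddHom.coe_mk] at hF hS
    refine ⟨?_, ?_, ?_, ?_, ?_, ?_, ?_, ?_, ?_, ?_, ?_⟩
    · intro i hi j hj
      simp only [mem_Icc] at hi hj
      have e := congrFun hF (gridIdx hN i, gridIdx hN j)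
      simp only [Fone] at e
      rw [hval i (by omega) (by omega), hval j (by omega) (by omega)] at e
      rw [if_pos ⟨hi.1, hi.2, hj.1, hj.2⟩] at e
      exact e
    · intro i hi j hj
      simp only [mem_Icc] at hi hj
      have e := congrFun hS (gridIdx hN i, gridIdx hN j)
      simp only [Ftwo] at e
      rw [hval i (by omega) (by omega), hval j (by omega) (by omega)] at e
      rw [if_pos ⟨hi.1, hi.2, hj.1, hj.2⟩] at e
      rw [if_neg (by omega)] at e
      exact e
    · intro i hi j hj hb
      simp only [mem_Icc] at hi hj
      have e := congrFun hF (gridIdx hN i, gridIdx hN j)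
      simp only [Fone] at e
      rw [hval i (by omega) (by omega), hval j (by omega) (by omega)] at e
      rw [if_neg (by omega)] at e
      exact e
    · intro j hj
      simp only [mem_Icc] at hj
      have e := congrFun hS (gridIdx hN 1, gridIdx hN j)
      simp only [Ftwo] at e
      rw [hval 1 (by omega) (by omega), hval j (by omega) (by omega)] at e
      rw [if_neg (by omega), if_pos ⟨rfl, hj.1, hj.2⟩, if_neg (by omega)] at e
      linear_combination e
    · intro j hj
      simp only [mem_Icc] at hj
      have e := congrFun hS (gridIdx hN N, gridIdx hN j)
      simp only [Ftwo] at e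
      rw [hval N (by omega) (by omega), hval j (by omega) (by omega)] at e
      rw [if_neg (by omega), if_neg (by omega), if_pos ⟨rfl, hj.1, hj.2⟩,
        if_neg (by omega)] at e
      linear_combination e
    · intro i hi
      simp only [mem_Icc] at hi
      have e := congrFun hS (gridIdx hN i, gridIdx hN 1)
      simp only [Ftwo] at e
      rw [hval i (by omega) (by omega), hval 1 (by omega) (by omega)] at e
      rw [if_neg (by omega), if_neg (by omega), if_neg (by omega),
        if_pos ⟨hi.1, hi.2, rfl⟩, if_neg (by omega)] at e
      linear_combination e
    · intro i hi
      simp only [mem_Icc] at hi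
      have e := congrFun hS (gridIdx hN i, gridIdx hN N)
      simp only [Ftwo] at e
      rw [hval i (by omega) (by omega), hval N (by omega) (by omega)] at e
      rw [if_neg (by omega), if_neg (by omega), if_neg (by omega), if_neg (by omega),
        if_pos ⟨hi.1, hi.2, rfl⟩, if_pos ⟨hi.1, hi.2, rfl⟩] at e
      rw [eq_div_iff hh2]
      field_simp at e ⊢
      linarith [e]
    · -- corner (1,1)
      have e := congrFun hS (gridIdx hN 1, gridIdx hN 1)
      simp only [Ftwo] at e
      rw [hval 1 (by omega) (by omega)] at e
      rw [if_neg (by omega), if_neg (by omega), if_neg (by omega), if_neg (by omega),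
        if_neg (by omega), if_neg (by omega)] at e
      exact e
    · have e := congrFun hS (gridIdx hN 1, gridIdx hN N)
      simp only [Ftwo] at e
      rw [hval 1 (by omega) (by omega), hval N (by omega) (by omega)] at e
      rw [if_neg (by omega), if_neg (by omega), if_neg (by omega), if_neg (by omega),
        if_neg (by omega), if_neg (by omega)] at e
      exact e
    · have e := congrFun hS (gridIdx hN N, gridIdx hN 1)
      simp only [Ftwo] at e
      rw [hval N (by omega) (by omega), hval 1 (by omega) (by omega)] at e
      rw [if_neg (by omega), if_neg (by omega), if_neg (by omega), if_neg (by omega),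
        if_neg (by omega), if_neg (by omega)] at e
      exact e
    · have e := congrFun hS (gridIdx hN N, gridIdx hN N)
      simp only [Ftwo] at e
      rw [hval N (by omega) (by omega)] at e
      rw [if_neg (by omega), if_neg (by omega), if_neg (by omega), if_neg (by omega),
        if_neg (by omega), if_neg (by omega)] at e
      exact e

/-- the discrete steady cavity flow problem with Reynolds number
`R = 0` has exactly one solution `(ψ, ω)`. -/
theorem discrete_cavity_flow_R_zero_unique_solution
    (N : ℕ) (hN : 3 ≤ N) (h : ℝ) (hh : 0 < h) (s : ℝ) :
    ∃! p : ((Fin N × Fin N) → ℝ) × ((Fin N × Fin N) → ℝ),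
      -- (i) discretized Poisson equation at interior points
      (∀ i ∈ Finset.Icc 2 (N-1), ∀ j ∈ Finset.Icc 2 (N-1),
        -4 * p.1 (gridIdx hN i, gridIdx hN j) + p.1 (gridIdx hN (i+1), gridIdx hN j)
          + p.1 (gridIdx hN (i-1), gridIdx hN j) + p.1 (gridIdx hN i, gridIdx hN (j+1))
          + p.1 (gridIdx hN i, gridIdx hN (j-1))
          + h ^ 2 * p.2 (gridIdx hN i, gridIdx hN j) = 0)
      -- (ii) discretized vorticity equation (R = 0) at interior points
      ∧ (∀ i ∈ Finset.Icc 2 (N-1), ∀ j ∈ Finset.Icc 2 (N-1),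
        -4 * p.2 (gridIdx hN i, gridIdx hN j) + p.2 (gridIdx hN (i+1), gridIdx hN j)
          + p.2 (gridIdx hN (i-1), gridIdx hN j) + p.2 (gridIdx hN i, gridIdx hN (j+1))
          + p.2 (gridIdx hN i, gridIdx hN (j-1)) = 0)
      -- (iii) ψ vanishes at boundary points
      ∧ (∀ i ∈ Finset.Icc 1 N, ∀ j ∈ Finset.Icc 1 N,
          (i = 1 ∨ i = N ∨ j = 1 ∨ j = N) → p.1 (gridIdx hN i, gridIdx hN j) = 0)
      -- (iv) boundary conditions for ω on the four open edges
      ∧ (∀ j ∈ Finset.Icc 2 (N-1),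
          p.2 (gridIdx hN 1, gridIdx hN j) = -2 * p.1 (gridIdx hN 2, gridIdx hN j) / h ^ 2)
      ∧ (∀ j ∈ Finset.Icc 2 (N-1),
          p.2 (gridIdx hN N, gridIdx hN j) = -2 * p.1 (gridIdx hN (N-1), gridIdx hN j) / h ^ 2)
      ∧ (∀ i ∈ Finset.Icc 2 (N-1),
          p.2 (gridIdx hN i, gridIdx hN 1) = -2 * p.1 (gridIdx hN i, gridIdx hN 2) / h ^ 2)
      ∧ (∀ i ∈ Finset.Icc 2 (N-1),
          p.2 (gridIdx hN i, gridIdx hN N)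
            = -(2 * p.1 (gridIdx hN i, gridIdx hN (N-1)) + 2 * s * h) / h ^ 2)
      -- (v) ω vanishes at the four corners
      ∧ p.2 (gridIdx hN 1, gridIdx hN 1) = 0
      ∧ p.2 (gridIdx hN 1, gridIdx hN N) = 0
      ∧ p.2 (gridIdx hN N, gridIdx hN 1) = 0
      ∧ p.2 (gridIdx hN N, gridIdx hN N) = 0 := by
    classical
  have hc0 : cVec N h 0 = 0 := by
    apply Prod.ext
    · rfl
    · funext q
      simp only [cVec, Prod.snd_zero, Pi.zero_apply]
      split_ifs <;> norm_num
  have hker : ∀ p : ((Fin N × Fin N) → ℝ) × ((Fin N × Fin N) → ℝ),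
      cavityL N hN h p = 0 → p = 0 := by
    intro p hp
    have hp' : cavityL N hN h p = cVec N h 0 := by rw [hc0]; exact hp
    obtain ⟨H1, H2, H3, H4, H5, H6, H7, H8, H9, H10, H11⟩ :=
      (equiv_iff N hN h hh 0 p).mpr hp'
    have H7' : ∀ i ∈ Finset.Icc 2 (N-1),
        p.2 (gridIdx hN i, gridIdx hN N)
          = -2 * p.1 (gridIdx hN i, gridIdx hN (N-1)) / h ^ 2 := by
      intro i hi
      rw [H7 i hi]; ring
    have hzero := core N hN h hh
      (fun i j => p.1 (gridIdx hN i, gridIdx hN j))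
      (fun i j => p.2 (gridIdx hN i, gridIdx hN j))
      H1 H2 H3 H4 H5 H6 H7' H8 H9 H10 H11
    apply Prod.ext
    · funext q
      have hq1 : q.1.val + 1 ∈ Finset.Icc 1 N := mem_Icc.mpr ⟨by omega, q.1.isLt⟩
      have hq2 : q.2.val + 1 ∈ Finset.Icc 1 N := mem_Icc.mpr ⟨by omega, q.2.isLt⟩
      have h1 := (hzero (q.1.val+1) hq1 (q.2.val+1) hq2).1
      rw [gridIdx_succ hN, gridIdx_succ hN] at h1
      simpa using h1
    · funext q
      have hq1 : q.1.val + 1 ∈ Finset.Icc 1 N := mem_Icc.mpr ⟨by omega, q.1.isLt⟩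
      have hq2 : q.2.val + 1 ∈ Finset.Icc 1 N := mem_Icc.mpr ⟨by omega, q.2.isLt⟩
      have h1 := (hzero (q.1.val+1) hq1 (q.2.val+1) hq2).2
      rw [gridIdx_succ hN, gridIdx_succ hN] at h1
      simpa using h1
  have hinj : Function.Injective (cavityL N hN h) := by
    intro a b hab
    have : cavityL N hN h (a - b) = 0 := by rw [map_sub, hab, sub_self]
    exact sub_eq_zero.mp (hker _ this)
  have hsurj : Function.Surjective (cavityL N hN h) :=
    LinearMap.injective_iff_surjective.mp hinj
  obtain ⟨p₀, hp₀⟩ := hsurj (cVec N h s)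
  refine ⟨p₀, (equiv_iff N hN h hh s p₀).mpr hp₀, ?_⟩
  intro p hp
  exact hinj (((equiv_iff N hN h hh s p).mp hp).trans hp₀.symm)
end
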